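/- Let G be a finite group and V a finite-dimensional complex vector space with a representation ρ of G on V, with character χ(g) = trace(ρ(g)). If for some g ∈ G the absolute value ‖χ(g)‖ equals finrank ℂ V (i.e. equals χ(1)), then ρ(g) is a scalar multiple of the identity: there exists c : ℂ with ρ(g) = c • id. -/

import Mathlib

open Polynomial Matrix

lemma multiset_all_eq_one {s : Multiset ℝ} (hle : ∀ x ∈ s, x ≤ 1)
    (hsum : s.sum = s.card) : ∀ x ∈ s, x = 1 := by
  intro x hx
  by_contra hne
  obtain ⟨t, rfl⟩ := Multiset.exists_cons_of_mem hx
  have hlt : x < 1 := lt_of_le_of_ne (hle x (Multiset.mem_cons_self _ _)) hne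
  have ht : t.sum ≤ (t.card : ℝ) := by
    simpa using Multiset.sum_le_card_nsmul t 1 (fun y hy => hle y (Multiset.mem_cons_of_mem hy))
  have : (x ::ₘ t).sum < ((x ::ₘ t).card : ℝ) := by
    rw [Multiset.sum_cons, Multiset.card_cons]
    push_cast
    linarith
  rw [hsum] at this
  exact lt_irrefl _ this

lemma multiset_norm_sum_eq_card {s : Multiset ℂ} (hnorm : ∀ x ∈ s, ‖x‖ = 1)
    (hsum : ‖s.sum‖ = s.card) : ∃ c : ℂ, ∀ x ∈ s, x = c := by
  rcases eq_or_ne s 0 with rfl | hcard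
  · exact ⟨0, by simp⟩
  have hcard' : (0 : ℝ) < s.card := by
    simpa using Multiset.card_pos.2 hcard
  have hz : s.sum ≠ 0 := by
    intro h0; rw [h0, norm_zero] at hsum; linarith
  have habs : ‖s.sum‖ ≠ 0 := by
    simpa using norm_ne_zero_iff.2 hz
  set w : ℂ := (starRingEnd ℂ) s.sum / ‖s.sum‖ with hw
  have hwnorm : ‖w‖ = 1 := by
    rw [hw, norm_div]
    simp only [Complex.norm_conj, Complex.norm_real, norm_norm]
    rw [div_self (norm_ne_zero_iff.2 hz)]
  have hws : w * s.sum = (‖s.sum‖ : ℂ) := by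
    rw [hw, div_mul_eq_mul_div, mul_comm, Complex.mul_conj, Complex.normSq_eq_norm_sq]
    push_cast
    rw [sq, mul_div_assoc, div_self (Complex.ofReal_ne_zero.2 habs), mul_one]
  have hre_le : ∀ x ∈ s.map (fun x => (w * x).re), x ≤ 1 := by
    intro x hx
    obtain ⟨y, hy, rfl⟩ := Multiset.mem_map.1 hx
    calc (w * y).re ≤ ‖w * y‖ := Complex.re_le_norm _
      _ = 1 := by rw [norm_mul, hwnorm, hnorm y hy, mul_one]
  have hre_sum : (s.map (fun x => (w * x).re)).sum = (s.map (fun x => (w * x).re)).card := by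
    have h1 : (s.map (fun x => (w * x).re)).sum = (w * s.sum).re := by
      have h2 := map_multiset_sum Complex.reAddGroupHom (s.map (fun x => w * x))
      simp only [Multiset.map_map, Function.comp] at h2
      have h3 : (s.map (fun x => w * x)).sum = w * s.sum := by
        simpa using Multiset.sum_map_mul_left (s := s) (a := w) (f := fun x => x)
      rw [h3] at h2
      exact h2.symm
    rw [h1, hws]
    simp [hsum]
  have hall := multiset_all_eq_one hre_le hre_sum
  refine ⟨w⁻¹, fun x hx => ?_⟩
  have h1 : (w * x).re = 1 := hall _ (Multiset.mem_map_of_mem _ hx)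
  have h2 : ‖w * x‖ = 1 := by rw [norm_mul, hwnorm, hnorm x hx, mul_one]
  have h3 : w * x = 1 := by
    have him : (w * x).im = 0 := by
      have := Complex.sq_norm (w * x)
      rw [h2] at this
      rw [Complex.normSq_apply, h1] at this
      nlinarith [sq_nonneg (w * x).im]
    exact Complex.ext (by simp [h1]) (by simp [him])
  have hwne : w ≠ 0 := by intro h0; rw [h0, norm_zero] at hwnorm; norm_num at hwnorm
  field_simp
  rw [mul_comm] at h3
  exact h3

lemma norm_root_charpoly {n : ℕ} {A : Matrix (Fin n) (Fin n) ℂ} {k : ℕ} (hk : k ≠ 0)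
    (hA : A ^ k = 1) {μ : ℂ} (hμ : μ ∈ A.charpoly.roots) : ‖μ‖ = 1 := by
  have hroot : A.charpoly.IsRoot μ :=
    (Polynomial.mem_roots (A.charpoly_monic.ne_zero)).1 hμ
  have hdet : (μ • (1 : Matrix (Fin n) (Fin n) ℂ) - A).det = 0 := by
    have h1 : ((charmatrix A).map (Polynomial.eval μ)).det = 0 := by
      have h2 := RingHom.map_det (Polynomial.evalRingHom μ) (charmatrix A)
      simp only [RingHom.mapMatrix_apply, Polynomial.coe_evalRingHom] at h2
      rw [← h2]
      exact hroot
    convert h1 using 2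
    ext i j
    by_cases hij : i = j
    · subst hij
      simp [charmatrix_apply_eq, Matrix.smul_apply, Matrix.one_apply]
    · simp [charmatrix_apply_ne _ _ _ hij, Matrix.smul_apply, Matrix.one_apply, hij]
  obtain ⟨v, hv, hmul⟩ := (Matrix.exists_mulVec_eq_zero_iff).2 hdet
  have heig : A *ᵥ v = μ • v := by
    have := hmul
    rw [Matrix.sub_mulVec, Matrix.smul_mulVec, Matrix.one_mulVec, sub_eq_zero] at this
    exact this.symm
  have hpow : ∀ m : ℕ, (A ^ m) *ᵥ v = μ ^ m • v := by
    intro m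
    induction m with
    | zero => simp [Matrix.one_mulVec]
    | succ m ih =>
      rw [pow_succ, ← Matrix.mulVec_mulVec, heig, Matrix.mulVec_smul, ih, smul_smul, pow_succ]
      ring_nf
  have hμk : μ ^ k = 1 := by
    have := hpow k
    rw [hA, Matrix.one_mulVec] at this
    have h2 : (μ ^ k - 1) • v = 0 := by rw [sub_smul, one_smul, ← this, sub_self]
    rcases smul_eq_zero.1 h2 with h | h
    · exact sub_eq_zero.1 h
    · exact absurd h hv
  exact Complex.norm_eq_one_of_pow_eq_one hμk hk

/-- For a finite group `G` and a finite-dimensional complex representation `ρ`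
with character `χ g = trace (ρ g)`, if `‖χ g‖ = finrank ℂ V` for some `g`, then `ρ g` is a
scalar multiple of the identity. -/
theorem character_norm_eq_finrank_imp_scalar
    {G V : Type} [Group G] [Finite G] [AddCommGroup V] [Module ℂ V] [FiniteDimensional ℂ V]
    (ρ : Representation ℂ G V)
    (χ : G → ℂ) (hχ : ∀ g : G, χ g = LinearMap.trace ℂ V (ρ g))
    (g : G) (h : ‖χ g‖ = (Module.finrank ℂ V : ℝ)) :
    ∃ c : ℂ, ρ g = c • (LinearMap.id : V →ₗ[ℂ] V) := by
  set n := Module.finrank ℂ V with hn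
  rcases Nat.eq_zero_or_pos n with hn0 | hnpos
  · have hfr : Module.finrank ℂ V = 0 := by rw [← hn]; exact hn0
    have : Subsingleton V := Module.finrank_zero_iff.1 hfr
    exact ⟨0, LinearMap.ext fun v => Subsingleton.elim _ _⟩
  -- nontrivial case
  have hVnontriv : Nontrivial V := Module.finrank_pos_iff.1 hnpos
  set b : Module.Basis (Fin n) ℂ V := Module.finBasis ℂ V
  set f : V →ₗ[ℂ] V := ρ g with hf
  set A : Matrix (Fin n) (Fin n) ℂ := LinearMap.toMatrix b b f with hA
  set k := orderOf g with hkdef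
  have hk : k ≠ 0 := (orderOf_pos g).ne'
  have hfk : f ^ k = 1 := by
    rw [hf, ← map_pow, pow_orderOf_eq_one, _root_.map_one]
  have hAk : A ^ k = 1 := by
    have h1 : A = LinearMap.toMatrixAlgEquiv b f := rfl
    rw [h1, ← map_pow, hfk, _root_.map_one]
  -- roots of charpoly
  set s := A.charpoly.roots with hs
  have hsplits : A.charpoly.Splits := IsAlgClosed.splits A.charpoly
  have hcards : Multiset.card s = n := by
    rw [hs, (Polynomial.splits_iff_card_roots).1 hsplits]
    simp [Matrix.charpoly_natDegree_eq_dim]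
  have htr : χ g = s.sum := by
    rw [hχ g, LinearMap.trace_eq_matrix_trace ℂ b f, ← hA, Matrix.trace_eq_sum_roots_charpoly]
  have hnorm1 : ∀ x ∈ s, ‖x‖ = 1 := fun x hx => norm_root_charpoly hk hAk hx
  have hsum : ‖s.sum‖ = Multiset.card s := by
    rw [← htr, h, hcards]
  obtain ⟨c, hc⟩ := multiset_norm_sum_eq_card hnorm1 hsum
  -- charpoly = (X - C c) ^ n
  have hrep : s = Multiset.replicate n c := Multiset.eq_replicate.2 ⟨hcards, hc⟩
  have hcharA : A.charpoly = (X - C c) ^ n := by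
    have h1 := Polynomial.Splits.eq_prod_roots_of_monic hsplits A.charpoly_monic
    rw [← hs, hrep] at h1
    rw [h1, Multiset.map_replicate, Multiset.prod_replicate]
  have hcharf : f.charpoly = (X - C c) ^ n := by
    rw [← LinearMap.charpoly_toMatrix f b, ← hA, hcharA]
  -- minpoly
  have haeval : Polynomial.aeval f ((X : ℂ[X]) ^ k - 1) = 0 := by
    rw [map_sub, map_pow, Polynomial.aeval_X, _root_.map_one, hfk, sub_self]
  have hmonicXk : ((X : ℂ[X]) ^ k - 1).Monic := by
    have := Polynomial.monic_X_pow_sub_C (1 : ℂ) hk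
    simpa using this
  have hint : IsIntegral ℂ f := ⟨(X : ℂ[X]) ^ k - 1, hmonicXk, haeval⟩
  have hsqfree : Squarefree (minpoly ℂ f) := by
    have hsep : ((X : ℂ[X]) ^ k - 1).Separable :=
      Polynomial.X_pow_sub_one_separable_iff.2 (by
        exact_mod_cast (Nat.cast_ne_zero (R := ℂ)).2 hk)
    exact Squarefree.squarefree_of_dvd (minpoly.dvd ℂ f haeval) hsep.squarefree
  have hdvd : minpoly ℂ f ∣ (X - C c) ^ n := by
    rw [← hcharf]
    exact LinearMap.minpoly_dvd_charpoly f
  obtain ⟨i, hin, hassoc⟩ := (dvd_prime_pow (Polynomial.prime_X_sub_C c) n).1 hdvd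
  have hmineq : minpoly ℂ f = (X - C c) ^ i :=
    Polynomial.eq_of_monic_of_associated (minpoly.monic hint)
      ((Polynomial.monic_X_sub_C c).pow i) hassoc
  have hi1 : i = 1 := by
    rcases Nat.lt_or_ge i 1 with h1 | h1
    · interval_cases i
      exfalso
      have := minpoly.natDegree_pos hint
      rw [hmineq] at this
      simp at this
    rcases Nat.lt_or_ge i 2 with h2 | h2
    · omega
    · exfalso
      refine Polynomial.not_isUnit_X_sub_C c (hsqfree (X - C c) ?_)
      rw [hmineq, ← sq]
      exact pow_dvd_pow _ h2
  have hfinal := minpoly.aeval ℂ f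
  rw [hmineq, hi1, pow_one, map_sub, Polynomial.aeval_X, Polynomial.aeval_C,
    sub_eq_zero] at hfinal
  exact ⟨c, by rw [hf] at hfinal ⊢; rw [hfinal, Module.algebraMap_end_eq_smul_id]⟩
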